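/- Let γ₊, γ₋ > 0, s > 0, m ≥ 1, α ∈ [0,∞)^m with Σ α_i < 1, η₀ ∈ ℝ, η ∈ ℝ^m. Let w be a nontrivial solution of -u'' = s²(γ₊² u⁺ - γ₋² u⁻) on ℝ satisfying w(η₀) = Σ_{i=1}^m α_i w(η_i). Then w'(η₀) ≠ 0. -/

import Mathlib

open Filter Asymptotics

lemma posSq_deriv (u : ℝ) : HasDerivAt (fun v : ℝ => (max v 0)^2) (2 * max u 0) u := by
  rcases lt_trichotomy u 0 with h | h | h
  · have hev : (fun v : ℝ => (max v 0)^2) =ᶠ[nhds u] fun _ => (0:ℝ) := by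
      filter_upwards [isOpen_Iio.eventually_mem (show u ∈ Set.Iio 0 from h)] with v hv
      simp [max_eq_right (le_of_lt (Set.mem_Iio.mp hv))]
    rw [max_eq_right h.le, mul_zero]
    exact (hasDerivAt_const u (0:ℝ)).congr_of_eventuallyEq hev
  · subst h
    rw [hasDerivAt_iff_isLittleO]
    have h1 : (fun v : ℝ => (max v 0)^2) =O[nhds 0] (fun v : ℝ => v * v) := by
      apply isBigO_of_le
      intro v
      simp only [Real.norm_eq_abs]
      rw [abs_of_nonneg (by positivity), abs_mul]
      rcases le_total v 0 with hv | hv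
      · rw [max_eq_right hv]; simpa using mul_nonneg (abs_nonneg v) (abs_nonneg v)
      · rw [max_eq_left hv, abs_of_nonneg hv]; nlinarith
    have h2 : (fun v : ℝ => v * v) =o[nhds 0] (fun v : ℝ => v) := by
      have : (fun v : ℝ => v) =o[nhds 0] (fun _ : ℝ => (1:ℝ)) :=
        (isLittleO_one_iff ℝ).mpr (by exact Filter.tendsto_id)
      simpa using this.mul_isBigO (isBigO_refl (fun v : ℝ => v) (nhds 0))
    have h3 := h1.trans_isLittleO h2
    simpa using h3
  · have hev : (fun v : ℝ => (max v 0)^2) =ᶠ[nhds u] fun v => v^2 := by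
      filter_upwards [isOpen_Ioi.eventually_mem (show u ∈ Set.Ioi 0 from h)] with v hv
      simp [max_eq_left (le_of_lt (Set.mem_Ioi.mp hv))]
    rw [max_eq_left h.le]
    have h2 : HasDerivAt (fun v : ℝ => v^2) (2 * u) u := by
      simpa using hasDerivAt_pow 2 u
    exact h2.congr_of_eventuallyEq hev

theorem stmt_6 (γp γm s : ℝ) (hγp : 0 < γp) (hγm : 0 < γm) (hs : 0 < s)
    (m : ℕ) (hm : 1 ≤ m) (α : Fin m → ℝ)
    (hα0 : ∀ i, 0 ≤ α i) (hαs : ∑ i, α i < 1)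
    (η0 : ℝ) (η : Fin m → ℝ)
    (w w' : ℝ → ℝ)
    (hw : ∀ x, HasDerivAt w (w' x) x)
    (hw' : ∀ x, HasDerivAt w'
      (-(s ^ 2 * (γp ^ 2 * max (w x) 0 - γm ^ 2 * max (-w x) 0))) x)
    (hne : w ≠ 0)
    (hbc : w η0 = ∑ i, α i * w (η i)) :
    w' η0 ≠ 0 := by
  intro h0
  -- energy
  set G : ℝ → ℝ := fun u => γp^2 * (max u 0)^2 + γm^2 * (max (-u) 0)^2 with hG
  have hGd : ∀ u : ℝ, HasDerivAt G (2 * (γp^2 * max u 0 - γm^2 * max (-u) 0)) u := by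
    intro u
    have h1 := (posSq_deriv u).const_mul (γp^2)
    have h2 : HasDerivAt (fun v : ℝ => γm^2 * (max (-v) 0)^2)
        (γm^2 * (2 * max (-u) 0) * (-1)) u := by
      have := ((posSq_deriv (-u)).comp u (hasDerivAt_neg u)).const_mul (γm^2)
      simpa [mul_comm, mul_assoc, mul_left_comm] using this
    have := h1.add h2
    refine this.congr_deriv ?_
    ring
  set E : ℝ → ℝ := fun x => (w' x)^2 + s^2 * G (w x) with hE
  have hEd : ∀ x, HasDerivAt E 0 x := by
    intro x
    have h1 := ((hw' x).pow 2)
    have h2 := ((hGd (w x)).comp x (hw x)).const_mul (s^2)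
    have := h1.add h2
    refine this.congr_deriv ?_
    simp only [Nat.cast_ofNat, pow_one]
    ring
  have hEc : ∀ x, E x = E η0 := by
    intro x
    have : ∀ y, deriv E y = 0 := fun y => (hEd y).deriv
    exact is_const_of_deriv_eq_zero (fun y => (hEd y).differentiableAt) this x η0
  have hGle : ∀ x, G (w x) ≤ G (w η0) := by
    intro x
    have h1 := hEc x
    simp only [hE] at h1
    rw [h0] at h1
    have hs2 : (0:ℝ) < s^2 := by positivity
    nlinarith [sq_nonneg (w' x)]
  have hGnonneg : ∀ u : ℝ, 0 ≤ G u := by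
    intro u; simp only [hG]; positivity
  rcases lt_trichotomy (w η0) 0 with hw0 | hw0 | hw0
  · -- negative case: w x ≥ w η0 for all x
    have hmin : ∀ x, w η0 ≤ w x := by
      intro x
      by_contra hc
      push_neg at hc
      have hx0 : w x < 0 := hc.trans hw0
      have hG0 : G (w η0) = γm^2 * (w η0)^2 := by
        simp [hG, max_eq_right hw0.le, max_eq_left (neg_nonneg.mpr hw0.le)]
      have hGx : G (w x) = γm^2 * (w x)^2 := by
        simp [hG, max_eq_right hx0.le, max_eq_left (neg_nonneg.mpr hx0.le)]
      have := hGle x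
      rw [hG0, hGx] at this
      nlinarith [mul_pos hγm hγm, mul_pos (show (0:ℝ) < w η0 - w x by linarith)
        (show (0:ℝ) < -(w x + w η0) by linarith)]
    have : w η0 < ∑ i, α i * w (η i) := by
      calc w η0 < (∑ i, α i) * w η0 := by nlinarith
        _ = ∑ i, α i * w η0 := Finset.sum_mul _ _ _
        _ ≤ ∑ i, α i * w (η i) :=
          Finset.sum_le_sum fun i _ => mul_le_mul_of_nonneg_left (hmin (η i)) (hα0 i)
    linarith [hbc ▸ this]
  · -- zero case: w ≡ 0
    have hGz : G (w η0) = 0 := by simp [hG, hw0]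
    apply hne
    funext x
    have h1 := hGle x
    rw [hGz] at h1
    have h2 := hGnonneg (w x)
    have h3 : G (w x) = 0 := le_antisymm h1 h2
    simp only [hG] at h3
    have hp : max (w x) 0 = 0 := by
      have h4 : (max (w x) 0)^2 = 0 := by
        nlinarith [sq_nonneg (max (w x) 0), sq_nonneg (max (-w x) 0),
          mul_pos hγp hγp, mul_pos hγm hγm,
          mul_nonneg (mul_pos hγm hγm).le (sq_nonneg (max (-w x) 0))]
      exact pow_eq_zero_iff (two_ne_zero) |>.mp h4
    have hn : max (-w x) 0 = 0 := by
      have h4 : (max (-w x) 0)^2 = 0 := by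
        nlinarith [sq_nonneg (max (w x) 0), sq_nonneg (max (-w x) 0),
          mul_pos hγp hγp, mul_pos hγm hγm,
          mul_nonneg (mul_pos hγp hγp).le (sq_nonneg (max (w x) 0))]
      exact pow_eq_zero_iff (two_ne_zero) |>.mp h4
    have := max_eq_right_iff.mp hp
    have := max_eq_right_iff.mp hn
    simp only [Pi.zero_apply]
    linarith
  · -- positive case
    have hmax : ∀ x, w x ≤ w η0 := by
      intro x
      by_contra hc
      push_neg at hc
      have hx0 : 0 < w x := hw0.trans hc
      have hG0 : G (w η0) = γp^2 * (w η0)^2 := by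
        simp [hG, max_eq_left hw0.le, max_eq_right (neg_nonpos.mpr hw0.le)]
      have hGx : G (w x) = γp^2 * (w x)^2 := by
        simp [hG, max_eq_left hx0.le, max_eq_right (neg_nonpos.mpr hx0.le)]
      have := hGle x
      rw [hG0, hGx] at this
      nlinarith [mul_pos hγp hγp, mul_pos (show (0:ℝ) < w x - w η0 by linarith)
        (show (0:ℝ) < w x + w η0 by linarith)]
    have : ∑ i, α i * w (η i) < w η0 := by
      calc ∑ i, α i * w (η i) ≤ ∑ i, α i * w η0 :=
            Finset.sum_le_sum fun i _ => mul_le_mul_of_nonneg_left (hmax (η i)) (hα0 i)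
        _ = (∑ i, α i) * w η0 := (Finset.sum_mul _ _ _).symm
        _ < w η0 := by nlinarith
    linarith [hbc ▸ this]
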